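/- Let m ≥ 3 be odd, let λ = e^{2πi/m} (a primitive m-th root of unity), and let i be a positive integer with gcd(i, m) = 1. Let A = ℂ⟨u,v⟩/(u² − λ^i·v²). Let τ : A → A be the ℂ-algebra endomorphism determined by τ(u) = −u, τ(v) = −v. Let S₊, S₋ : A → A be any ℂ-linear maps satisfying, for all nonnegative integers p and all integers q ≥ 1: S₊(u^{2p}·(vu)^q) = λ^{−iq}·u^{2p+1}·(vu)^{q−1}·v, S₊(u^{2p+1}·(vu)^{q−1}·v) = λ^{iq}·u^{2p}·(vu)^q, S₊(u^{2p}) = u^{2p}, and S₋(u^{2p}·(vu)^q) = λ^{iq}·u^{2p+1}·(vu)^{q−1}·v, S₋(u^{2p+1}·(vu)^{q−1}·v) = λ^{−iq}·u^{2p}·(vu)^q, S₋(u^{2p}) = u^{2p}. Then the set { F ∈ A : τ(F) = F, S₊(F) = F, S₋(F) = F } equals the ℂ-subalgebra of A generated by u² and (uv)^m + (vu)^m. -/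

import Mathlib

/-! Theorem 5.7 of Ferraro–Kirkman–Moore–Won: the fixed ring of the inner-faithful
action of Masuoka's Hopf algebra `𝓐_{4m}`, `m` odd, on `A⁻ = ℂ⟨u,v⟩/(u² - λ^i v²)`
is `ℂ[u², (uv)^m + (vu)^m]`. -/

noncomputable section

open FreeAlgebra

/-- The relation `u² = C • v²` on `ℂ⟨u,v⟩`, i.e. the quotient by the two-sided
ideal generated by `u² - C·v²`. -/
inductive Stmt17.Rel (C : ℂ) : FreeAlgebra ℂ (Fin 2) → FreeAlgebra ℂ (Fin 2) → Prop
  | main : Stmt17.Rel C (ι ℂ 0 * ι ℂ 0) (C • (ι ℂ 1 * ι ℂ 1))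

/-- `A = ℂ⟨u,v⟩/(u² - C·v²)`. -/
abbrev Stmt17.A (C : ℂ) := RingQuot (Stmt17.Rel C)

def Stmt17.u (C : ℂ) : Stmt17.A C := RingQuot.mkAlgHom ℂ (Stmt17.Rel C) (ι ℂ 0)
def Stmt17.v (C : ℂ) : Stmt17.A C := RingQuot.mkAlgHom ℂ (Stmt17.Rel C) (ι ℂ 1)

namespace Stmt17
variable {C : ℂ}

lemma usq : u C * u C = C • (v C * v C) := by
  have := RingQuot.mkAlgHom_rel ℂ (Rel.main (C := C))
  simpa [u, v, map_mul] using this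

lemma A.induction {P : A C → Prop} (halg : ∀ r : ℂ, P (algebraMap ℂ (A C) r))
    (hu : P (u C)) (hv : P (v C)) (hmul : ∀ a b, P a → P b → P (a * b))
    (hadd : ∀ a b, P a → P b → P (a + b)) : ∀ a, P a := by
  intro a
  obtain ⟨x, rfl⟩ := RingQuot.mkAlgHom_surjective ℂ (Rel C) a
  induction x using FreeAlgebra.induction with
  | grade0 r => simpa using halg r
  | grade1 j =>
      fin_cases j
      · exact hu
      · exact hv
  | mul a b ha hb => rw [map_mul]; exact hmul _ _ ha hb
  | add a b ha hb => rw [map_add]; exact hadd _ _ ha hb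

lemma central (t : A C) : Commute (u C * u C) t := by
  induction t using A.induction with
  | halg r => exact Algebra.commute_algebraMap_right r _
  | hu => exact (Commute.refl (u C)).mul_left (Commute.refl _)
  | hv =>
      show u C * u C * v C = v C * (u C * u C)
      rw [usq, smul_mul_assoc, mul_smul_comm, mul_assoc]
  | hmul a b ha hb => exact ha.mul_right hb
  | hadd a b ha hb => exact ha.add_right hb

lemma central_sq (t : A C) : Commute (u C ^ 2) t := by rw [sq]; exact central t

lemma central_pow (p : ℕ) (t : A C) : Commute (u C ^ (2 * p)) t := by
  rw [pow_mul]; exact (central_sq t).pow_left p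

lemma vsq (h : C ≠ 0) : v C * v C = C⁻¹ • (u C * u C) := by
  rw [usq, smul_smul, inv_mul_cancel₀ h, one_smul]

lemma uv_pow_succ (q : ℕ) :
    (u C * v C) ^ (q + 1) = u C * ((v C * u C) ^ q * v C) := by
  induction q with
  | zero => simp
  | succ q ih =>
      rw [pow_succ', ih, pow_succ']
      noncomm_ring

lemma v_uv_pow (q : ℕ) :
    v C * (u C * v C) ^ q = (v C * u C) ^ q * v C := by
  induction q with
  | zero => simp
  | succ q ih =>
      rw [pow_succ', pow_succ']
      calc v C * (u C * v C * (u C * v C) ^ q)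
          = (v C * u C) * (v C * (u C * v C) ^ q) := by noncomm_ring
        _ = (v C * u C) * ((v C * u C) ^ q * v C) := by rw [ih]
        _ = v C * u C * (v C * u C) ^ q * v C := by noncomm_ring

lemma xy (h : C ≠ 0) : (u C * v C) * (v C * u C) = C⁻¹ • u C ^ 4 := by
  have h1 : (u C * v C) * (v C * u C) = u C * (v C * v C) * u C := by noncomm_ring
  rw [h1, vsq h, mul_smul_comm, smul_mul_assoc]
  congr 1
  noncomm_ring

lemma yx (h : C ≠ 0) : (v C * u C) * (u C * v C) = C⁻¹ • u C ^ 4 := by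
  have h1 : (v C * u C) * (u C * v C) = v C * (u C * u C) * v C := by noncomm_ring
  rw [h1, usq, mul_smul_comm, smul_mul_assoc]
  have h2 : v C * (v C * v C) * v C = (v C * v C) * (v C * v C) := by noncomm_ring
  rw [h2, vsq h, smul_mul_assoc, mul_smul_comm, smul_smul, smul_smul]
  have h3 : C * C⁻¹ * C⁻¹ = C⁻¹ := by field_simp
  rw [h3]
  congr 1
  noncomm_ring

lemma commute_xy (h : C ≠ 0) : Commute (u C * v C) (v C * u C) := by
  show _ = _
  rw [xy h, yx h]

/-- basis-type elements -/
def ee (C : ℂ) (p q : ℕ) : A C := u C ^ (2 * p) * (v C * u C) ^ q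
def ff (C : ℂ) (p q : ℕ) : A C := u C ^ (2 * p) * (u C * v C) ^ q
def og1 (C : ℂ) (p q : ℕ) : A C := u C ^ (2 * p + 1) * (v C * u C) ^ q
def og2 (C : ℂ) (p q : ℕ) : A C := u C ^ (2 * p) * ((v C * u C) ^ q * v C)

lemma ffalt (p q : ℕ) : ff C p (q + 1) = u C ^ (2 * p + 1) * (v C * u C) ^ q * v C := by
  rw [ff, uv_pow_succ, pow_succ]
  noncomm_ring

def G (C : ℂ) : (ℕ × ℕ) ⊕ (ℕ × ℕ) → A C :=
  Sum.elim (fun pq => ee C pq.1 pq.2) (fun pq => ff C pq.1 (pq.2 + 1))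

def H (C : ℂ) : ((ℕ × ℕ) ⊕ (ℕ × ℕ)) ⊕ ((ℕ × ℕ) ⊕ (ℕ × ℕ)) → A C :=
  Sum.elim (G C) (Sum.elim (fun pq => og1 C pq.1 pq.2) (fun pq => og2 C pq.1 pq.2))

lemma reduce_xy (h : C ≠ 0) (a j n : ℕ) (hjn : j ≤ n) :
    u C ^ (2 * a) * ((u C * v C) ^ j * (v C * u C) ^ n) =
      (C⁻¹) ^ j • ee C (a + 2 * j) (n - j) := by
  have h1 : (u C * v C) ^ j * (v C * u C) ^ n
      = ((u C * v C) ^ j * (v C * u C) ^ j) * (v C * u C) ^ (n - j) := by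
    rw [mul_assoc, ← pow_add]
    congr 2
    omega
  rw [h1, ← (commute_xy h).mul_pow, xy h, smul_pow, smul_mul_assoc, mul_smul_comm, ee]
  congr 1
  rw [← mul_assoc, ← pow_mul, ← pow_add]
  congr 2
  ring

lemma reduce_yx (h : C ≠ 0) (a j n : ℕ) (hjn : j ≤ n) :
    u C ^ (2 * a) * ((u C * v C) ^ n * (v C * u C) ^ j) =
      (C⁻¹) ^ j • ff C (a + 2 * j) (n - j) := by
  have h1 : (u C * v C) ^ n * (v C * u C) ^ j
      = (u C * v C) ^ (n - j) * ((u C * v C) ^ j * (v C * u C) ^ j) := by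
    rw [← mul_assoc, ← pow_add]
    congr 2
    omega
  rw [h1, ← (commute_xy h).mul_pow, xy h, smul_pow, mul_smul_comm, mul_smul_comm, ff]
  congr 1
  have h2 : (u C ^ 4) ^ j = u C ^ (2 * (2 * j)) := by rw [← pow_mul]; congr 1; ring
  rw [h2, ((central_pow (2 * j) ((u C * v C) ^ (n - j))).symm).eq, ← mul_assoc, ← pow_add]
  congr 2
  ring


lemma u_shift (n : ℕ) (t : A C) :
    u C * (u C ^ n * t) = u C ^ n * (u C * t) := by
  rw [← mul_assoc, ((Commute.refl (u C)).pow_right n).eq, mul_assoc]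

lemma v_shift (p : ℕ) (t : A C) :
    v C * (u C ^ (2 * p) * t) = u C ^ (2 * p) * (v C * t) := by
  rw [← mul_assoc, ((central_pow p (v C)).eq).symm, mul_assoc]

lemma v_y (h : C ≠ 0) (q : ℕ) (t : A C) :
    v C * ((v C * u C) ^ (q + 1) * t) =
      C⁻¹ • (u C * (u C * (u C * ((v C * u C) ^ q * t)))) := by
  rw [pow_succ']
  calc v C * (v C * u C * (v C * u C) ^ q * t)
      = (v C * v C) * (u C * ((v C * u C) ^ q * t)) := by noncomm_ring
    _ = (C⁻¹ • (u C * u C)) * (u C * ((v C * u C) ^ q * t)) := by rw [vsq h]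
    _ = C⁻¹ • (u C * (u C * (u C * ((v C * u C) ^ q * t)))) := by
        rw [smul_mul_assoc]; congr 1; noncomm_ring

lemma mulU_mem (j : ((ℕ × ℕ) ⊕ (ℕ × ℕ)) ⊕ ((ℕ × ℕ) ⊕ (ℕ × ℕ))) :
    u C * H C j ∈ Submodule.span ℂ (Set.range (H C)) := by
  have mem' : ∀ k, H C k ∈ Submodule.span ℂ (Set.range (H C)) :=
    fun k => Submodule.subset_span ⟨k, rfl⟩
  rcases j with (⟨p, q⟩ | ⟨p, q⟩) | (⟨p, q⟩ | ⟨p, q⟩)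
  · -- u * ee p q = og1 p q
    have : u C * H C (Sum.inl (Sum.inl (p, q))) =
        H C (Sum.inr (Sum.inl (p, q))) := by
      show u C * ee C p q = og1 C p q
      rw [ee, og1, ← mul_assoc, ← pow_succ']
    rw [this]; exact mem' _
  · -- u * ff p (q+1) = og2 (p+1) q
    have : u C * H C (Sum.inl (Sum.inr (p, q))) =
        H C (Sum.inr (Sum.inr (p + 1, q))) := by
      show u C * ff C p (q + 1) = og2 C (p + 1) q
      rw [ff, og2, uv_pow_succ]
      calc u C * (u C ^ (2 * p) * (u C * ((v C * u C) ^ q * v C)))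
          = (u C * u C ^ (2 * p) * u C) * ((v C * u C) ^ q * v C) := by noncomm_ring
        _ = u C ^ (2 * (p + 1)) * ((v C * u C) ^ q * v C) := by
            rw [← pow_succ', ← pow_succ, show 2 * (p + 1) = 2 * p + 1 + 1 from by ring]
    rw [this]; exact mem' _
  · -- u * og1 p q = ee (p+1) q
    have : u C * H C (Sum.inr (Sum.inl (p, q))) =
        H C (Sum.inl (Sum.inl (p + 1, q))) := by
      show u C * og1 C p q = ee C (p + 1) q
      rw [og1, ee, ← mul_assoc, ← pow_succ',
        show 2 * (p + 1) = 2 * p + 1 + 1 from by ring]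
    rw [this]; exact mem' _
  · -- u * og2 p q = ff p (q+1)
    have : u C * H C (Sum.inr (Sum.inr (p, q))) =
        H C (Sum.inl (Sum.inr (p, q))) := by
      show u C * og2 C p q = ff C p (q + 1)
      rw [og2, ff, uv_pow_succ, u_shift]
    rw [this]; exact mem' _

lemma mulV_mem (h : C ≠ 0) (j : ((ℕ × ℕ) ⊕ (ℕ × ℕ)) ⊕ ((ℕ × ℕ) ⊕ (ℕ × ℕ))) :
    v C * H C j ∈ Submodule.span ℂ (Set.range (H C)) := by
  have mem' : ∀ k, H C k ∈ Submodule.span ℂ (Set.range (H C)) :=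
    fun k => Submodule.subset_span ⟨k, rfl⟩
  have smem : ∀ (c : ℂ) k, c • H C k ∈ Submodule.span ℂ (Set.range (H C)) :=
    fun c k => Submodule.smul_mem _ c (mem' k)
  rcases j with (⟨p, q⟩ | ⟨p, q⟩) | (⟨p, q⟩ | ⟨p, q⟩)
  · -- v * ee p q
    rcases q with _ | q
    · -- v * ee p 0 = og2 p 0
      have : v C * H C (Sum.inl (Sum.inl (p, 0))) =
          H C (Sum.inr (Sum.inr (p, 0))) := by
        show v C * ee C p 0 = og2 C p 0
        rw [ee, og2, pow_zero, mul_one, one_mul]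
        exact ((central_pow p (v C)).eq).symm
      rw [this]; exact mem' _
    · -- v * ee p (q+1) = C⁻¹ • og1 (p+1) q
      have : v C * H C (Sum.inl (Sum.inl (p, q + 1))) =
          C⁻¹ • H C (Sum.inr (Sum.inl (p + 1, q))) := by
        show v C * ee C p (q + 1) = C⁻¹ • og1 C (p + 1) q
        have hvy := v_y h q (1 : A C)
        rw [mul_one, mul_one] at hvy
        rw [ee, og1, v_shift, hvy, mul_smul_comm]
        congr 1
        calc u C ^ (2 * p) * (u C * (u C * (u C * (v C * u C) ^ q)))
            = ((u C ^ (2 * p) * u C) * u C * u C) * (v C * u C) ^ q := by noncomm_ring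
          _ = u C ^ (2 * (p + 1) + 1) * (v C * u C) ^ q := by
              rw [← pow_succ, ← pow_succ, ← pow_succ,
                show 2 * (p + 1) + 1 = 2 * p + 1 + 1 + 1 from by ring]
      rw [this]; exact smem _ _
  · -- v * ff p (q+1) = og2 p (q+1)
    have : v C * H C (Sum.inl (Sum.inr (p, q))) =
        H C (Sum.inr (Sum.inr (p, q + 1))) := by
      show v C * ff C p (q + 1) = og2 C p (q + 1)
      rw [ff, og2, v_shift, v_uv_pow]
    rw [this]; exact mem' _
  · -- v * og1 p q = ee p (q+1)
    have : v C * H C (Sum.inr (Sum.inl (p, q))) =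
        H C (Sum.inl (Sum.inl (p, q + 1))) := by
      show v C * og1 C p q = ee C p (q + 1)
      rw [og1, ee, pow_succ, mul_assoc, v_shift]
      congr 1
      rw [← mul_assoc, ← pow_succ']
    rw [this]; exact mem' _
  · -- v * og2 p q
    rcases q with _ | q
    · have : v C * H C (Sum.inr (Sum.inr (p, 0))) =
          C⁻¹ • H C (Sum.inl (Sum.inl (p + 1, 0))) := by
        show v C * og2 C p 0 = C⁻¹ • ee C (p + 1) 0
        rw [og2, ee]
        simp only [pow_zero, one_mul, mul_one]
        rw [v_shift, vsq h, mul_smul_comm]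
        congr 1
        calc u C ^ (2 * p) * (u C * u C) = (u C ^ (2 * p) * u C) * u C := by
              noncomm_ring
          _ = u C ^ (2 * (p + 1)) := by
              rw [← pow_succ, ← pow_succ, show 2 * (p + 1) = 2 * p + 1 + 1 from by ring]
      rw [this]; exact smem _ _
    · have : v C * H C (Sum.inr (Sum.inr (p, q + 1))) =
          C⁻¹ • H C (Sum.inl (Sum.inr (p + 1, q))) := by
        show v C * og2 C p (q + 1) = C⁻¹ • ff C (p + 1) (q + 1)
        rw [og2, ff, uv_pow_succ, v_shift, v_y h q (v C), mul_smul_comm]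
        congr 1
        calc u C ^ (2 * p) * (u C * (u C * (u C * ((v C * u C) ^ q * v C))))
            = ((u C ^ (2 * p) * u C) * u C) * (u C * ((v C * u C) ^ q * v C)) := by
              noncomm_ring
          _ = u C ^ (2 * (p + 1)) * (u C * ((v C * u C) ^ q * v C)) := by
              rw [← pow_succ, ← pow_succ, show 2 * (p + 1) = 2 * p + 1 + 1 from by ring]
      rw [this]; exact smem _ _

lemma span_top (h : C ≠ 0) : Submodule.span ℂ (Set.range (H C)) = ⊤ := by
  set W := Submodule.span ℂ (Set.range (H C)) with hW
  have hone : (1 : A C) ∈ W := by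
    have h1 : H C (Sum.inl (Sum.inl (0, 0))) = 1 := by
      show ee C 0 0 = 1
      simp [ee]
    exact h1 ▸ Submodule.subset_span ⟨_, rfl⟩
  have stepu : ∀ b ∈ W, u C * b ∈ W := by
    intro b hb
    have hmap : Submodule.map (LinearMap.mulLeft ℂ (u C)) W ≤ W := by
      rw [hW, Submodule.map_span, Submodule.span_le]
      rintro _ ⟨_, ⟨j, rfl⟩, rfl⟩
      exact mulU_mem j
    exact hmap ⟨b, hb, rfl⟩
  have stepv : ∀ b ∈ W, v C * b ∈ W := by
    intro b hb
    have hmap : Submodule.map (LinearMap.mulLeft ℂ (v C)) W ≤ W := by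
      rw [hW, Submodule.map_span, Submodule.span_le]
      rintro _ ⟨_, ⟨j, rfl⟩, rfl⟩
      exact mulV_mem h j
    exact hmap ⟨b, hb, rfl⟩
  have main : ∀ a : A C, ∀ b ∈ W, a * b ∈ W := by
    intro a
    induction a using A.induction with
    | halg r =>
        intro b hb
        rw [← Algebra.smul_def]
        exact W.smul_mem r hb
    | hu => exact stepu
    | hv => exact stepv
    | hmul a b ha hb => intro t ht; rw [mul_assoc]; exact ha _ (hb _ ht)
    | hadd a b ha hb => intro t ht; rw [add_mul]; exact W.add_mem (ha _ ht) (hb _ ht)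
  rw [eq_top_iff]
  rintro a -
  simpa using main a 1 hone


/-! ### A polynomial matrix representation -/

open MvPolynomial in
abbrev R2 := MvPolynomial (Fin 2) ℂ
abbrev M2 := Matrix (Fin 2) (Fin 2) R2

open MvPolynomial

def s (C : ℂ) : R2 := C • (X 0 * X 1)
def Mu (C : ℂ) : M2 := !![0, s C; 1, 0]
def Mv : M2 := !![0, X 0; X 1, 0]

lemma MuMu (C : ℂ) : Mu C * Mu C = Matrix.diagonal ![s C, s C] := by
  rw [Mu]
  ext i j
  fin_cases i <;> fin_cases j <;>
    simp [Matrix.mul_apply, Fin.sum_univ_two, Matrix.diagonal]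

lemma MvMv : Mv * Mv = Matrix.diagonal ![X 0 * X 1, X 1 * X 0] := by
  rw [Mv]
  ext i j
  fin_cases i <;> fin_cases j <;>
    simp [Matrix.mul_apply, Fin.sum_univ_two, Matrix.diagonal]

lemma Murel (C : ℂ) : Mu C * Mu C = C • (Mv * Mv) := by
  rw [MuMu, MvMv, ← Matrix.diagonal_smul]
  congr 1
  funext j
  fin_cases j <;> simp [s, mul_comm]

lemma MvMu (C : ℂ) : Mv * Mu C = Matrix.diagonal ![X 0, X 1 * s C] := by
  rw [Mu, Mv]
  ext i j
  fin_cases i <;> fin_cases j <;>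
    simp [Matrix.mul_apply, Fin.sum_univ_two, Matrix.diagonal]

lemma MuMv (C : ℂ) : Mu C * Mv = Matrix.diagonal ![s C * X 1, X 0] := by
  rw [Mu, Mv]
  ext i j
  fin_cases i <;> fin_cases j <;>
    simp [Matrix.mul_apply, Fin.sum_univ_two, Matrix.diagonal]

lemma Mupow (C : ℂ) (p : ℕ) :
    Mu C ^ (2 * p) = Matrix.diagonal ![s C ^ p, s C ^ p] := by
  rw [pow_mul, sq, MuMu, Matrix.diagonal_pow]
  have h : (![s C, s C] : Fin 2 → R2) ^ p = ![s C ^ p, s C ^ p] := by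
    funext j; fin_cases j <;> simp [Pi.pow_apply]
  rw [h]

lemma entry_e (C : ℂ) (p q : ℕ) :
    (Mu C ^ (2 * p) * (Mv * Mu C) ^ q) 0 0 = s C ^ p * X 0 ^ q := by
  rw [Mupow, MvMu, Matrix.diagonal_pow, Matrix.diagonal_mul_diagonal]
  simp [Matrix.diagonal]

lemma entry_f (C : ℂ) (p q : ℕ) :
    (Mu C ^ (2 * p) * (Mu C * Mv) ^ q) 0 0 = s C ^ p * (s C * X 1) ^ q := by
  rw [Mupow, MuMv, Matrix.diagonal_pow, Matrix.diagonal_mul_diagonal]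
  simp [Matrix.diagonal]

def mono (a b : ℕ) : R2 := X 0 ^ a * X 1 ^ b

lemma e_poly (C : ℂ) (p q : ℕ) :
    s C ^ p * X 0 ^ q = C ^ p • mono (p + q) p := by
  rw [s, smul_pow, smul_mul_assoc, mono]
  congr 1
  ring

lemma f_poly (C : ℂ) (p q : ℕ) :
    s C ^ p * (s C * X 1) ^ q = C ^ (p + q) • mono (p + q) (p + 2 * q) := by
  have h : s C ^ p * (s C * X 1) ^ q = s C ^ (p + q) * X 1 ^ q := by ring
  rw [h, s, smul_pow, smul_mul_assoc, mono]
  congr 1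
  ring

lemma mono_indep : LinearIndependent ℂ (fun ab : ℕ × ℕ => mono ab.1 ab.2) := by
  have key : (fun ab : ℕ × ℕ => mono ab.1 ab.2) =
      (MvPolynomial.basisMonomials (Fin 2) ℂ) ∘
        (fun ab : ℕ × ℕ => Finsupp.single 0 ab.1 + Finsupp.single 1 ab.2) := by
    funext ab
    simp only [Function.comp, MvPolynomial.coe_basisMonomials]
    rw [mono, X_pow_eq_monomial, X_pow_eq_monomial, monomial_mul, one_mul]
  rw [key]
  refine (MvPolynomial.basisMonomials (Fin 2) ℂ).linearIndependent.comp _ ?_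
  intro a b hab
  have h0 := DFunLike.congr_fun hab (0 : Fin 2)
  have h1 := DFunLike.congr_fun hab (1 : Fin 2)
  simp [Finsupp.single_apply] at h0 h1
  exact Prod.ext h0 h1

def repFun (C : ℂ) : A C →ₐ[ℂ] M2 :=
  RingQuot.liftAlgHom ℂ ⟨FreeAlgebra.lift ℂ ![Mu C, Mv], by
    rintro x y ⟨⟩
    simp only [map_mul, map_smul, FreeAlgebra.lift_ι_apply]
    simpa using Murel C⟩

lemma rep_u : repFun C (u C) = Mu C := by
  rw [u, repFun, RingQuot.liftAlgHom_mkAlgHom_apply]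
  simp

lemma rep_v : repFun C (v C) = Mv := by
  rw [v, repFun, RingQuot.liftAlgHom_mkAlgHom_apply]
  simp

def E00 : M2 →ₗ[ℂ] R2 where
  toFun M := M 0 0
  map_add' _ _ := rfl
  map_smul' _ _ := rfl

def psi (C : ℂ) : A C →ₗ[ℂ] R2 := E00 ∘ₗ (repFun C).toLinearMap

lemma psi_ee (p q : ℕ) : psi C (ee C p q) = C ^ p • mono (p + q) p := by
  rw [psi, ee]
  have : (E00 ∘ₗ (repFun C).toLinearMap) (u C ^ (2 * p) * (v C * u C) ^ q)
      = (Mu C ^ (2 * p) * (Mv * Mu C) ^ q) 0 0 := by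
    simp [E00, map_mul, map_pow, rep_u, rep_v]; rfl
  rw [this, entry_e, e_poly]

lemma psi_ff (p q : ℕ) : psi C (ff C p q) = C ^ (p + q) • mono (p + q) (p + 2 * q) := by
  rw [psi, ff]
  have : (E00 ∘ₗ (repFun C).toLinearMap) (u C ^ (2 * p) * (u C * v C) ^ q)
      = (Mu C ^ (2 * p) * (Mu C * Mv) ^ q) 0 0 := by
    simp [E00, map_mul, map_pow, rep_u, rep_v]; rfl
  rw [this, entry_f, f_poly]

def Gd : (ℕ × ℕ) ⊕ (ℕ × ℕ) → ℕ × ℕ :=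
  Sum.elim (fun pq => (pq.1 + pq.2, pq.1)) (fun pq => (pq.1 + pq.2 + 1, pq.1 + 2 * pq.2 + 2))

def Gc (C : ℂ) : (ℕ × ℕ) ⊕ (ℕ × ℕ) → ℂ :=
  Sum.elim (fun pq => C ^ pq.1) (fun pq => C ^ (pq.1 + pq.2 + 1))

lemma psi_G (j : (ℕ × ℕ) ⊕ (ℕ × ℕ)) :
    psi C (G C j) = Gc C j • mono (Gd j).1 (Gd j).2 := by
  rcases j with ⟨p, q⟩ | ⟨p, q⟩
  · exact psi_ee p q
  · show psi C (ff C p (q + 1)) = _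
    rw [psi_ff]
    have h1 : p + (q + 1) = p + q + 1 := by ring
    have h2 : p + 2 * (q + 1) = p + 2 * q + 2 := by ring
    rw [h1, h2]
    rfl

lemma Gd_inj : Function.Injective Gd := by
  rintro (⟨p, q⟩ | ⟨p, q⟩) (⟨p', q'⟩ | ⟨p', q'⟩) hab <;>
    simp only [Gd, Sum.elim_inl, Sum.elim_inr, Prod.mk.injEq] at hab
  · have h : p = p' ∧ q = q' := by omega
    simp [h.1, h.2]
  · exfalso; omega
  · exfalso; omega
  · have h : p = p' ∧ q = q' := by omega
    simp [h.1, h.2]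

lemma indepG (h : C ≠ 0) : LinearIndependent ℂ (G C) := by
  apply LinearIndependent.of_comp (psi C)
  have hmem : LinearIndependent ℂ
      ((fun ab : ℕ × ℕ => mono ab.1 ab.2) ∘ Gd) := mono_indep.comp Gd Gd_inj
  have := hmem.units_smul (fun j => Units.mk0 (Gc C j) (by
    rcases j with ⟨p, q⟩ | ⟨p, q⟩ <;> exact pow_ne_zero _ h))
  convert this using 1
  funext j
  show psi C (G C j) = _
  rw [psi_G]
  rfl


/-! ### Twisted coefficient functionals -/

section Twist
variable {ι : Type*} [DecidableEq ι]

def twist (π : ι → ι) (w : ι → ℂ) (l : ι →₀ ℂ) : ι →₀ ℂ :=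
  l.support.sum fun j => Finsupp.single (π j) (l j * w j)

lemma twist_apply (π : ι → ι) (hπ : Function.Involutive π) (w : ι → ℂ) (l : ι →₀ ℂ)
    (k : ι) : twist π w l k = l (π k) * w (π k) := by
  rw [twist, Finsupp.finset_sum_apply]
  rcases em (π k ∈ l.support) with hk | hk
  · rw [Finset.sum_eq_single (π k)]
    · simp [hπ k]
    · intro j _ hne
      rw [Finsupp.single_apply, if_neg]
      intro hh
      exact hne (by rw [← hh, hπ j])
    · exact fun hc => absurd hk hc
  · have h0 : l (π k) = 0 := Finsupp.notMem_support_iff.mp hk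
    rw [h0, zero_mul]
    apply Finset.sum_eq_zero
    intro j hj
    rw [Finsupp.single_apply, if_neg]
    intro hh
    have hjk : j = π k := by rw [← hh, hπ j]
    exact hk (hjk ▸ hj)

lemma total_twist {V : Type*} [AddCommGroup V] [Module ℂ V] (gg : ι → V)
    (π : ι → ι) (w : ι → ℂ) (l : ι →₀ ℂ) :
    Finsupp.linearCombination ℂ gg (twist π w l) =
      l.sum fun j c => (c * w j) • gg (π j) := by
  rw [twist, map_sum, Finsupp.sum]
  exact Finset.sum_congr rfl fun j _ => by rw [Finsupp.linearCombination_single]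

end Twist

/-! ### membership lemmas -/

lemma XY_mem (h : C ≠ 0) (m : ℕ) :
    ((u C * v C) ^ m) * ((v C * u C) ^ m) ∈
      Algebra.adjoin ℂ ({u C ^ 2, (u C * v C) ^ m + (v C * u C) ^ m} : Set (A C)) := by
  rw [← (commute_xy h).mul_pow, xy h, smul_pow]
  apply Subalgebra.smul_mem
  have h4 : (u C ^ 4) ^ m = (u C ^ 2) ^ (2 * m) := by
    rw [← pow_mul, ← pow_mul]
    congr 1
    ring
  rw [h4]
  exact pow_mem (Algebra.subset_adjoin (by simp)) _

lemma pow_sum_mem (h : C ≠ 0) (m : ℕ) (t : ℕ) :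
    (u C * v C) ^ (m * t) + (v C * u C) ^ (m * t) ∈
      Algebra.adjoin ℂ ({u C ^ 2, (u C * v C) ^ m + (v C * u C) ^ m} : Set (A C)) := by
  induction t using Nat.strong_induction_on with
  | _ t ih =>
    match t with
    | 0 => simpa using add_mem (one_mem _) (one_mem _)
    | 1 => rw [mul_one]; exact Algebra.subset_adjoin (by simp)
    | (t + 2) =>
      have hcom : Commute ((u C * v C) ^ m) ((v C * u C) ^ m) :=
        (commute_xy h).pow_pow m m
      set X := (u C * v C) ^ m with hX
      set Y := (v C * u C) ^ m with hY
      have ih1 := ih (t + 1) (by omega)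
      have ih0 := ih t (by omega)
      rw [pow_mul, pow_mul, ← hX, ← hY] at ih1 ih0 ⊢
      have e1 : X * Y ^ (t + 1) = (X * Y) * Y ^ t := by
        rw [pow_succ']
        noncomm_ring
      have e2 : Y * X ^ (t + 1) = (X * Y) * X ^ t := by
        rw [pow_succ', ← mul_assoc, ← hcom.eq]
      have heq : X ^ (t + 2) + Y ^ (t + 2) =
          (X + Y) * (X ^ (t + 1) + Y ^ (t + 1)) - (X * Y) * (X ^ t + Y ^ t) := by
        have hexp : (X + Y) * (X ^ (t + 1) + Y ^ (t + 1)) =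
            X * X ^ (t + 1) + ((X * Y) * X ^ t + ((X * Y) * Y ^ t + Y * Y ^ (t + 1))) := by
          rw [← e1, ← e2]
          noncomm_ring
        rw [pow_succ' X (t + 1), pow_succ' Y (t + 1), hexp, mul_add]
        abel
      rw [heq]
      refine sub_mem (mul_mem ?_ ih1) (mul_mem (XY_mem h m) ih0)
      exact Algebra.subset_adjoin (by simp)

lemma eeff_mem (h : C ≠ 0) (m p Q : ℕ) (hd : m ∣ Q) :
    ee C p Q + ff C p Q ∈
      Algebra.adjoin ℂ ({u C ^ 2, (u C * v C) ^ m + (v C * u C) ^ m} : Set (A C)) := by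
  obtain ⟨t, rfl⟩ := hd
  rw [ee, ff, ← mul_add]
  refine mul_mem ?_ ?_
  · rw [pow_mul]
    exact pow_mem (Algebra.subset_adjoin (by simp)) p
  · have hs := pow_sum_mem h m t
    rwa [add_comm ((u C * v C) ^ (m * t))] at hs

/-! ### The involution indexing the action of `S₊`, `S₋` -/

def pim : (ℕ × ℕ) ⊕ (ℕ × ℕ) → (ℕ × ℕ) ⊕ (ℕ × ℕ)
  | Sum.inl (p, 0) => Sum.inl (p, 0)
  | Sum.inl (p, q + 1) => Sum.inr (p, q)
  | Sum.inr (p, q) => Sum.inl (p, q + 1)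

lemma pim_inv : Function.Involutive pim := by
  rintro ((⟨p, _ | q⟩) | ⟨p, q⟩) <;> rfl

def wp (lam : ℂ) (i : ℕ) : (ℕ × ℕ) ⊕ (ℕ × ℕ) → ℂ
  | Sum.inl (_, 0) => 1
  | Sum.inl (_, q + 1) => lam ^ (-((i * (q + 1) : ℕ) : ℤ))
  | Sum.inr (_, q) => lam ^ (i * (q + 1))

def wm (lam : ℂ) (i : ℕ) : (ℕ × ℕ) ⊕ (ℕ × ℕ) → ℂ
  | Sum.inl (_, 0) => 1
  | Sum.inl (_, q + 1) => lam ^ (i * (q + 1))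
  | Sum.inr (_, q) => lam ^ (-((i * (q + 1) : ℕ) : ℤ))

end Stmt17

open Stmt17 in
theorem stmt_17 (m : ℕ) (hm : 3 ≤ m) (hodd : Odd m) (lam : ℂ)
    (hlam : lam = Complex.exp (2 * Real.pi * Complex.I / m))
    (i : ℕ) (hipos : 1 ≤ i) (hcop : Nat.gcd i m = 1)
    (C : ℂ) (hC : C = lam ^ i)
    (τ : A C →ₐ[ℂ] A C) (hτu : τ (u C) = -u C) (hτv : τ (v C) = -v C)
    (Sp Sm : A C →ₗ[ℂ] A C)
    (hSp1 : ∀ p q : ℕ, 1 ≤ q →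
      Sp (u C ^ (2 * p) * (v C * u C) ^ q) =
        lam ^ (-((i * q : ℕ) : ℤ)) • (u C ^ (2 * p + 1) * (v C * u C) ^ (q - 1) * v C))
    (hSp2 : ∀ p q : ℕ, 1 ≤ q →
      Sp (u C ^ (2 * p + 1) * (v C * u C) ^ (q - 1) * v C) =
        lam ^ (i * q) • (u C ^ (2 * p) * (v C * u C) ^ q))
    (hSp3 : ∀ p : ℕ, Sp (u C ^ (2 * p)) = u C ^ (2 * p))
    (hSm1 : ∀ p q : ℕ, 1 ≤ q →
      Sm (u C ^ (2 * p) * (v C * u C) ^ q) =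
        lam ^ (i * q) • (u C ^ (2 * p + 1) * (v C * u C) ^ (q - 1) * v C))
    (hSm2 : ∀ p q : ℕ, 1 ≤ q →
      Sm (u C ^ (2 * p + 1) * (v C * u C) ^ (q - 1) * v C) =
        lam ^ (-((i * q : ℕ) : ℤ)) • (u C ^ (2 * p) * (v C * u C) ^ q))
    (hSm3 : ∀ p : ℕ, Sm (u C ^ (2 * p)) = u C ^ (2 * p)) :
    {F : A C | τ F = F ∧ Sp F = F ∧ Sm F = F} =
      (Algebra.adjoin ℂ
        ({u C ^ 2, (u C * v C) ^ m + (v C * u C) ^ m} : Set (A C)) : Set (A C)) := by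
  have hm0 : m ≠ 0 := by omega
  have hprim : IsPrimitiveRoot lam m := by
    rw [hlam]; exact Complex.isPrimitiveRoot_exp m hm0
  have hlam0 : lam ≠ 0 := by
    have h1 : lam ^ m = 1 := hprim.pow_eq_one
    intro h0
    rw [h0, zero_pow hm0] at h1
    exact zero_ne_one h1
  have hC0 : C ≠ 0 := by rw [hC]; exact pow_ne_zero _ hlam0
  have hnn : -v C * -u C = v C * u C := @neg_mul_neg (A C) _ _ (v C) (u C)
  have hnn2 : -u C * -v C = u C * v C := @neg_mul_neg (A C) _ _ (u C) (v C)
  have hnegsq : (-u C) ^ 2 = u C ^ 2 := @neg_sq (A C) _ _ (u C)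
  have hnegeven : ∀ p : ℕ, (-u C) ^ (2 * p) = u C ^ (2 * p) :=
    fun p => @Even.neg_pow (A C) _ _ _ (even_two_mul p) (u C)
  have hnegodd : ∀ p : ℕ, (-u C) ^ (2 * p + 1) = -(u C ^ (2 * p + 1)) :=
    fun p => @Odd.neg_pow (A C) _ _ _ ⟨p, by ring⟩ (u C)
  have hnegmul : ∀ x y : A C, -x * y = -(x * y) := fun x y => @neg_mul (A C) _ _ x y
  have hmulneg : ∀ x y : A C, x * -y = -(x * y) := fun x y => @mul_neg (A C) _ _ x y
  have hz1 : ∀ Q : ℕ, m ∣ Q → lam ^ (i * Q) = 1 := by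
    rintro Q ⟨t, rfl⟩
    rw [show i * (m * t) = m * (i * t) from by ring, pow_mul, hprim.pow_eq_one, one_pow]
  have hz2 : ∀ Q : ℕ, m ∣ Q → lam ^ (-((i * Q : ℕ) : ℤ)) = 1 := by
    intro Q hQ
    rw [zpow_neg, zpow_natCast, hz1 Q hQ, inv_one]
  have hz3 : ∀ Q : ℕ, ¬ m ∣ Q → lam ^ (i * Q) ≠ lam ^ (-((i * Q : ℕ) : ℤ)) := by
    intro Q hQ heqq
    apply hQ
    have h2 : lam ^ (2 * (i * Q)) = 1 := by
      rw [two_mul, pow_add]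
      nth_rewrite 2 [heqq]
      rw [← zpow_natCast lam (i * Q), ← zpow_add₀ hlam0]
      simp
    have h3 : m ∣ 2 * (i * Q) := (hprim.pow_eq_one_iff_dvd _).mp h2
    have h2m : ¬ (2 ∣ m) := by
      have := Nat.odd_iff.mp hodd
      omega
    have hm2 : Nat.Coprime m 2 :=
      ((Nat.Prime.coprime_iff_not_dvd Nat.prime_two).mpr h2m).symm
    have h4 : m ∣ i * Q := hm2.dvd_of_dvd_mul_left h3
    have hmi : Nat.Coprime m i := Nat.Coprime.symm hcop
    exact hmi.dvd_of_dvd_mul_left h4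
  -- derived action on basis elements
  have hee0 : ∀ p : ℕ, ee C p 0 = u C ^ (2 * p) := fun p => by simp [ee]
  have hSp_e0 : ∀ p, Sp (ee C p 0) = ee C p 0 := fun p => by rw [hee0]; exact hSp3 p
  have hSm_e0 : ∀ p, Sm (ee C p 0) = ee C p 0 := fun p => by rw [hee0]; exact hSm3 p
  have hSp_e : ∀ p q : ℕ,
      Sp (ee C p (q + 1)) = lam ^ (-((i * (q + 1) : ℕ) : ℤ)) • ff C p (q + 1) := by
    intro p q
    have h := hSp1 p (q + 1) (by omega)
    rw [Nat.add_sub_cancel, ← ffalt] at h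
    simpa [ee] using h
  have hSp_f : ∀ p q : ℕ,
      Sp (ff C p (q + 1)) = lam ^ (i * (q + 1)) • ee C p (q + 1) := by
    intro p q
    have h := hSp2 p (q + 1) (by omega)
    rw [Nat.add_sub_cancel, ← ffalt] at h
    simpa [ee] using h
  have hSm_e : ∀ p q : ℕ,
      Sm (ee C p (q + 1)) = lam ^ (i * (q + 1)) • ff C p (q + 1) := by
    intro p q
    have h := hSm1 p (q + 1) (by omega)
    rw [Nat.add_sub_cancel, ← ffalt] at h
    simpa [ee] using h
  have hSm_f : ∀ p q : ℕ,
      Sm (ff C p (q + 1)) = lam ^ (-((i * (q + 1) : ℕ) : ℤ)) • ee C p (q + 1) := by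
    intro p q
    have h := hSm2 p (q + 1) (by omega)
    rw [Nat.add_sub_cancel, ← ffalt] at h
    simpa [ee] using h
  have hSpG : ∀ j, Sp (G C j) = wp lam i j • G C (pim j) := by
    rintro (⟨p, _ | q⟩ | ⟨p, q⟩)
    · show Sp (ee C p 0) = (1 : ℂ) • ee C p 0
      rw [one_smul]; exact hSp_e0 p
    · exact hSp_e p q
    · exact hSp_f p q
  have hSmG : ∀ j, Sm (G C j) = wm lam i j • G C (pim j) := by
    rintro (⟨p, _ | q⟩ | ⟨p, q⟩)
    · show Sm (ee C p 0) = (1 : ℂ) • ee C p 0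
      rw [one_smul]; exact hSm_e0 p
    · exact hSm_e p q
    · exact hSm_f p q
  -- the "swap" computation on products of powers
  have hterm : ∀ (T : A C →ₗ[ℂ] A C),
      (∀ p, T (ee C p 0) = ee C p 0) →
      (∀ p q, m ∣ (q + 1) → T (ee C p (q + 1)) = ff C p (q + 1)) →
      (∀ p q, m ∣ (q + 1) → T (ff C p (q + 1)) = ee C p (q + 1)) →
      ∀ a k l' : ℕ,
        T (u C ^ (2 * a) * ((u C * v C) ^ (m * k) * (v C * u C) ^ (m * l'))) =
          u C ^ (2 * a) * ((u C * v C) ^ (m * l') * (v C * u C) ^ (m * k)) := by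
    intro T T0 Te Tf a k l'
    have hef0 : ∀ P, ff C P 0 = ee C P 0 := by intro P; simp [ee, ff]
    rcases le_total k l' with hkl | hkl
    · have hj : m * k ≤ m * l' := Nat.mul_le_mul_left m hkl
      rw [reduce_xy hC0 a (m * k) (m * l') hj, reduce_yx hC0 a (m * k) (m * l') hj,
        map_smul]
      congr 1
      obtain ⟨d, rfl⟩ := Nat.exists_eq_add_of_le hkl
      have hsub : m * (k + d) - m * k = m * d := by
        rw [Nat.mul_add, Nat.add_sub_cancel_left]
      rw [hsub]
      rcases Nat.eq_zero_or_pos d with rfl | hdpos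
      · rw [Nat.mul_zero, hef0]; exact T0 _
      · have h1 : 1 ≤ m * d := Nat.mul_pos (by omega) hdpos
        obtain ⟨qq, hqq⟩ : ∃ qq, m * d = qq + 1 := ⟨m * d - 1, by omega⟩
        rw [hqq]
        exact Te _ qq (hqq ▸ ⟨d, rfl⟩)
    · have hj : m * l' ≤ m * k := Nat.mul_le_mul_left m hkl
      rw [reduce_yx hC0 a (m * l') (m * k) hj, reduce_xy hC0 a (m * l') (m * k) hj,
        map_smul]
      congr 1
      obtain ⟨d, rfl⟩ := Nat.exists_eq_add_of_le hkl
      have hsub : m * (l' + d) - m * l' = m * d := by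
        rw [Nat.mul_add, Nat.add_sub_cancel_left]
      rw [hsub]
      rcases Nat.eq_zero_or_pos d with rfl | hdpos
      · rw [Nat.mul_zero, hef0]; exact T0 _
      · have h1 : 1 ≤ m * d := Nat.mul_pos (by omega) hdpos
        obtain ⟨qq, hqq⟩ : ∃ qq, m * d = qq + 1 := ⟨m * d - 1, by omega⟩
        rw [hqq]
        exact Tf _ qq (hqq ▸ ⟨d, rfl⟩)
  have hSpTerm := hterm Sp hSp_e0
    (fun p q hq => by rw [hSp_e, hz2 _ hq, one_smul])
    (fun p q hq => by rw [hSp_f, hz1 _ hq, one_smul])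
  have hSmTerm := hterm Sm hSm_e0
    (fun p q hq => by rw [hSm_e, hz1 _ hq, one_smul])
    (fun p q hq => by rw [hSm_f, hz2 _ hq, one_smul])
  have hcomXY : Commute ((u C * v C) ^ m) ((v C * u C) ^ m) :=
    (commute_xy hC0).pow_pow m m
  -- action on monomials in the generators
  have hmono : ∀ (T : A C →ₗ[ℂ] A C),
      (∀ a k l' : ℕ,
        T (u C ^ (2 * a) * ((u C * v C) ^ (m * k) * (v C * u C) ^ (m * l'))) =
          u C ^ (2 * a) * ((u C * v C) ^ (m * l') * (v C * u C) ^ (m * k))) →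
      ∀ a b : ℕ,
        T ((u C ^ 2) ^ a * ((u C * v C) ^ m + (v C * u C) ^ m) ^ b) =
          (u C ^ 2) ^ a * ((u C * v C) ^ m + (v C * u C) ^ m) ^ b := by
    intro T hT a b
    have hconv : ∀ k : ℕ,
        (u C ^ 2) ^ a * (((u C * v C) ^ m) ^ k * ((v C * u C) ^ m) ^ (b - k)
            * ((b.choose k : ℕ) : A C)) =
          (b.choose k) •
            (u C ^ (2 * a) * ((u C * v C) ^ (m * k) * (v C * u C) ^ (m * (b - k)))) := by
      intro k
      rw [← pow_mul, ← pow_mul, ← pow_mul, nsmul_eq_mul,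
        (Nat.cast_commute (b.choose k) _).eq]
      noncomm_ring
    calc T ((u C ^ 2) ^ a * ((u C * v C) ^ m + (v C * u C) ^ m) ^ b)
        = T (∑ k ∈ Finset.range (b + 1), (u C ^ 2) ^ a *
            (((u C * v C) ^ m) ^ k * ((v C * u C) ^ m) ^ (b - k)
              * ((b.choose k : ℕ) : A C))) := by
          rw [hcomXY.add_pow, Finset.mul_sum]
      _ = ∑ k ∈ Finset.range (b + 1), (b.choose k) •
            T (u C ^ (2 * a) * ((u C * v C) ^ (m * k) * (v C * u C) ^ (m * (b - k)))) := by
          rw [map_sum]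
          exact Finset.sum_congr rfl fun k _ => by rw [hconv k, map_nsmul]
      _ = ∑ k ∈ Finset.range (b + 1), (b.choose k) •
            (u C ^ (2 * a) * ((u C * v C) ^ (m * (b - k)) * (v C * u C) ^ (m * k))) :=
          Finset.sum_congr rfl fun k _ => by rw [hT]
      _ = ∑ k ∈ Finset.range (b + 1), (b.choose k) •
            (u C ^ (2 * a) * ((u C * v C) ^ (m * k) * (v C * u C) ^ (m * (b - k)))) := by
          rw [← Finset.sum_range_reflect]
          refine Finset.sum_congr rfl fun k hk => ?_
          have hkb : k ≤ b := by
            have := Finset.mem_range.mp hk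
            omega
          rw [show b + 1 - 1 - k = b - k from by omega, Nat.sub_sub_self hkb,
            Nat.choose_symm hkb]
      _ = (u C ^ 2) ^ a * ((u C * v C) ^ m + (v C * u C) ^ m) ^ b := by
          rw [hcomXY.add_pow, Finset.mul_sum]
          exact Finset.sum_congr rfl fun k _ => (hconv k).symm
  -- monomial form of monoid closure
  have hmon : ∀ x ∈ Submonoid.closure
        ({u C ^ 2, (u C * v C) ^ m + (v C * u C) ^ m} : Set (A C)),
      ∃ a b : ℕ, x = (u C ^ 2) ^ a * ((u C * v C) ^ m + (v C * u C) ^ m) ^ b := by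
    intro x hx
    induction hx using Submonoid.closure_induction with
    | mem y hy =>
        rcases hy with rfl | rfl
        · exact ⟨1, 0, by simp⟩
        · exact ⟨0, 1, by simp⟩
    | one => exact ⟨0, 0, by simp⟩
    | mul x y _ _ hx hy =>
        obtain ⟨a, b, rfl⟩ := hx
        obtain ⟨c, d, rfl⟩ := hy
        refine ⟨a + c, b + d, ?_⟩
        rw [pow_add, pow_add]
        calc (u C ^ 2) ^ a * ((u C * v C) ^ m + (v C * u C) ^ m) ^ b *
              ((u C ^ 2) ^ c * ((u C * v C) ^ m + (v C * u C) ^ m) ^ d)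
            = (u C ^ 2) ^ a * ((((u C * v C) ^ m + (v C * u C) ^ m) ^ b * (u C ^ 2) ^ c) *
                ((u C * v C) ^ m + (v C * u C) ^ m) ^ d) := by noncomm_ring
          _ = (u C ^ 2) ^ a * (((u C ^ 2) ^ c * ((u C * v C) ^ m + (v C * u C) ^ m) ^ b) *
                ((u C * v C) ^ m + (v C * u C) ^ m) ^ d) := by
              rw [← ((central_sq (((u C * v C) ^ m + (v C * u C) ^ m) ^ b)).pow_left c).eq]
          _ = (u C ^ 2) ^ a * (u C ^ 2) ^ c *
                (((u C * v C) ^ m + (v C * u C) ^ m) ^ b *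
                  ((u C * v C) ^ m + (v C * u C) ^ m) ^ d) := by noncomm_ring
  -- linear fixing on the adjoined subalgebra
  have hfix : ∀ (T : A C →ₗ[ℂ] A C),
      (∀ a b : ℕ,
        T ((u C ^ 2) ^ a * ((u C * v C) ^ m + (v C * u C) ^ m) ^ b) =
          (u C ^ 2) ^ a * ((u C * v C) ^ m + (v C * u C) ^ m) ^ b) →
      ∀ F' ∈ Algebra.adjoin ℂ
        ({u C ^ 2, (u C * v C) ^ m + (v C * u C) ^ m} : Set (A C)), T F' = F' := by
    intro T hT F' hF'
    have hsp : F' ∈ Submodule.span ℂ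
        ((Submonoid.closure ({u C ^ 2, (u C * v C) ^ m + (v C * u C) ^ m} : Set (A C)) :
          Set (A C))) := by
      have h1 : F' ∈ Subalgebra.toSubmodule (Algebra.adjoin ℂ
          ({u C ^ 2, (u C * v C) ^ m + (v C * u C) ^ m} : Set (A C))) := hF'
      rw [Algebra.adjoin_eq_span] at h1
      exact h1
    refine Submodule.span_induction (p := fun x _ => T x = x) ?_ ?_ ?_ ?_ hsp
    · intro x hx
      obtain ⟨a, b, rfl⟩ := hmon x hx
      exact hT a b
    · simp
    · intro x y _ _ hx hy; rw [map_add, hx, hy]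
    · intro c x _ hx; rw [map_smul, hx]
  -- τ fixes the subalgebra
  have hτfix : ∀ F' ∈ Algebra.adjoin ℂ
      ({u C ^ 2, (u C * v C) ^ m + (v C * u C) ^ m} : Set (A C)), τ F' = F' := by
    intro F' hF'
    have hle : Algebra.adjoin ℂ
        ({u C ^ 2, (u C * v C) ^ m + (v C * u C) ^ m} : Set (A C)) ≤
        AlgHom.equalizer τ (AlgHom.id ℂ (A C)) := by
      apply Algebra.adjoin_le
      intro x hx
      rcases hx with rfl | rfl
      · show τ (u C ^ 2) = u C ^ 2
        rw [map_pow, hτu, hnegsq]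
      · show τ ((u C * v C) ^ m + (v C * u C) ^ m) = (u C * v C) ^ m + (v C * u C) ^ m
        rw [map_add, map_pow, map_pow, map_mul, map_mul, hτu, hτv, hnn2, hnn]
    exact hle hF'
  ext F
  simp only [Set.mem_setOf_eq, SetLike.mem_coe]
  constructor
  · rintro ⟨hτF, hSpF, hSmF⟩
    -- F lies in the span of the even basis elements
    have hFtop : F ∈ Submodule.span ℂ (Set.range (H C)) := by
      rw [span_top hC0]
      trivial
    set P : A C →ₗ[ℂ] A C := (2⁻¹ : ℂ) • (LinearMap.id + τ.toLinearMap) with hP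
    have hPF : P F = F := by
      rw [hP]
      simp only [LinearMap.smul_apply, LinearMap.add_apply, LinearMap.id_apply,
        AlgHom.toLinearMap_apply, hτF]
      rw [← two_smul ℂ F, smul_smul]
      norm_num
    have hτee : ∀ p q, τ (ee C p q) = ee C p q := by
      intro p q
      rw [ee, map_mul, map_pow, map_pow, map_mul, hτu, hτv, hnn, hnegeven p]
    have hτff : ∀ p q, τ (ff C p q) = ff C p q := by
      intro p q
      rw [ff, map_mul, map_pow, map_pow, map_mul, hτu, hτv, hnn2, hnegeven p]
    have hτog1 : ∀ p q, τ (og1 C p q) = -og1 C p q := by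
      intro p q
      rw [og1, map_mul, map_pow, map_pow, map_mul, hτu, hτv, hnn, hnegodd p,
        hnegmul]
    have hτog2 : ∀ p q, τ (og2 C p q) = -og2 C p q := by
      intro p q
      rw [og2, map_mul, map_mul, map_pow, map_pow, map_mul, hτu, hτv, hnn,
        hnegeven p, hmulneg, hmulneg]
    have hPH : ∀ j, P (H C j) ∈ Submodule.span ℂ (Set.range (G C)) := by
      rintro ((⟨p, q⟩ | ⟨p, q⟩) | (⟨p, q⟩ | ⟨p, q⟩))
      · have : P (H C (Sum.inl (Sum.inl (p, q)))) = G C (Sum.inl (p, q)) := by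
          rw [hP]
          simp only [LinearMap.smul_apply, LinearMap.add_apply, LinearMap.id_apply,
            AlgHom.toLinearMap_apply]
          show 2⁻¹ • (ee C p q + τ (ee C p q)) = ee C p q
          rw [hτee, ← two_smul ℂ, smul_smul]
          norm_num
        rw [this]
        exact Submodule.subset_span ⟨_, rfl⟩
      · have : P (H C (Sum.inl (Sum.inr (p, q)))) = G C (Sum.inr (p, q)) := by
          rw [hP]
          simp only [LinearMap.smul_apply, LinearMap.add_apply, LinearMap.id_apply,
            AlgHom.toLinearMap_apply]
          show 2⁻¹ • (ff C p (q + 1) + τ (ff C p (q + 1))) = ff C p (q + 1)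
          rw [hτff, ← two_smul ℂ, smul_smul]
          norm_num
        rw [this]
        exact Submodule.subset_span ⟨_, rfl⟩
      · have : P (H C (Sum.inr (Sum.inl (p, q)))) = 0 := by
          rw [hP]
          simp only [LinearMap.smul_apply, LinearMap.add_apply, LinearMap.id_apply,
            AlgHom.toLinearMap_apply]
          show 2⁻¹ • (og1 C p q + τ (og1 C p q)) = 0
          rw [hτog1, add_neg_cancel, smul_zero]
        rw [this]
        exact Submodule.zero_mem _
      · have : P (H C (Sum.inr (Sum.inr (p, q)))) = 0 := by
          rw [hP]
          simp only [LinearMap.smul_apply, LinearMap.add_apply, LinearMap.id_apply,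
            AlgHom.toLinearMap_apply]
          show 2⁻¹ • (og2 C p q + τ (og2 C p q)) = 0
          rw [hτog2, add_neg_cancel, smul_zero]
        rw [this]
        exact Submodule.zero_mem _
    have hFE : F ∈ Submodule.span ℂ (Set.range (G C)) := by
      have hmap : Submodule.map P (Submodule.span ℂ (Set.range (H C))) ≤
          Submodule.span ℂ (Set.range (G C)) := by
        rw [Submodule.map_span, Submodule.span_le]
        rintro _ ⟨_, ⟨j, rfl⟩, rfl⟩
        exact hPH j
      exact hPF ▸ hmap ⟨F, hFtop, rfl⟩
    obtain ⟨l, hl⟩ := Finsupp.mem_span_range_iff_exists_finsupp.mp hFE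
    -- coefficient equations
    have hkey : ∀ (T : A C →ₗ[ℂ] A C) (w : (ℕ × ℕ) ⊕ (ℕ × ℕ) → ℂ),
        (∀ j, T (G C j) = w j • G C (pim j)) → T F = F →
        ∀ k, l (pim k) * w (pim k) = l k := by
      intro T w hTG hTF k
      have h1 : Finsupp.linearCombination ℂ (G C) (twist pim w l) =
          Finsupp.linearCombination ℂ (G C) l := by
        rw [total_twist]
        calc (l.sum fun j c => (c * w j) • G C (pim j))
            = l.sum fun j c => c • T (G C j) := by
              apply Finsupp.sum_congr
              intro j _
              rw [hTG j, smul_smul]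
          _ = T (l.sum fun j c => c • G C j) := by
              rw [Finsupp.sum, Finsupp.sum, map_sum]
              exact Finset.sum_congr rfl fun j _ => (map_smul T _ _).symm
          _ = T F := by rw [hl]
          _ = F := hTF
          _ = Finsupp.linearCombination ℂ (G C) l := by
              rw [Finsupp.linearCombination_apply, hl]
      have h2 : twist pim w l = l := by
        have h3 : Finsupp.linearCombination ℂ (G C) (twist pim w l - l) = 0 := by
          rw [map_sub, h1, sub_self]
        have h4 := linearIndependent_iff.mp (indepG hC0) _ h3
        exact sub_eq_zero.mp h4
      have := DFunLike.congr_fun h2 k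
      rwa [twist_apply pim pim_inv w l k] at this
    have ESp := hkey Sp (wp lam i) hSpG hSpF
    have ESm := hkey Sm (wm lam i) hSmG hSmF
    have hzero : ∀ p q : ℕ, ¬ m ∣ (q + 1) →
        l (Sum.inr (p, q)) = 0 ∧ l (Sum.inl (p, q + 1)) = 0 := by
      intro p q hnd
      have e1 := ESp (Sum.inl (p, q + 1))
      have e2 := ESm (Sum.inl (p, q + 1))
      have hpim : pim (Sum.inl (p, q + 1)) = Sum.inr (p, q) := rfl
      rw [hpim] at e1 e2
      have hw1 : wp lam i (Sum.inr (p, q)) = lam ^ (i * (q + 1)) := rfl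
      have hw2 : wm lam i (Sum.inr (p, q)) = lam ^ (-((i * (q + 1) : ℕ) : ℤ)) := rfl
      rw [hw1] at e1
      rw [hw2] at e2
      have hdiff : l (Sum.inr (p, q)) *
          (lam ^ (i * (q + 1)) - lam ^ (-((i * (q + 1) : ℕ) : ℤ))) = 0 := by
        rw [mul_sub, e1, e2, sub_self]
      have h4 : l (Sum.inr (p, q)) = 0 := by
        rcases mul_eq_zero.mp hdiff with h | h
        · exact h
        · exact absurd (sub_eq_zero.mp h) (hz3 (q + 1) hnd)
      exact ⟨h4, by rw [← e1, h4, zero_mul]⟩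
    -- final assembly
    have hSpF' : Sp F = l.sum fun j c => c • (wp lam i j • G C (pim j)) := by
      rw [← hl]
      rw [Finsupp.sum, Finsupp.sum, map_sum]
      exact Finset.sum_congr rfl fun j _ => by rw [map_smul, hSpG j]
    have hF2 : F = l.sum fun j c =>
        (2⁻¹ * c) • (G C j + wp lam i j • G C (pim j)) := by
      have hFF : F = (2⁻¹ : ℂ) • (F + Sp F) := by
        rw [hSpF, ← two_smul ℂ F, smul_smul]
        norm_num
      rw [hFF, hSpF']
      nth_rewrite 1 [← hl]
      rw [← Finsupp.sum_add]
      rw [Finsupp.smul_sum]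
      apply Finsupp.sum_congr
      intro j _
      module
    rw [hF2]
    apply sum_mem
    intro j _
    rcases j with ⟨p, _ | q⟩ | ⟨p, q⟩
    · apply Subalgebra.smul_mem
      have hmem : ee C p 0 ∈ Algebra.adjoin ℂ
          ({u C ^ 2, (u C * v C) ^ m + (v C * u C) ^ m} : Set (A C)) := by
        rw [hee0, pow_mul]
        exact pow_mem (Algebra.subset_adjoin (by simp)) p
      exact add_mem hmem (Subalgebra.smul_mem _ hmem _)
    · by_cases hd : m ∣ (q + 1)
      · apply Subalgebra.smul_mem
        show ee C p (q + 1) + wp lam i (Sum.inl (p, q + 1)) • ff C p (q + 1) ∈ _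
        have hw : wp lam i (Sum.inl (p, q + 1)) = lam ^ (-((i * (q + 1) : ℕ) : ℤ)) := rfl
        rw [hw, hz2 _ hd, one_smul]
        exact eeff_mem hC0 m p (q + 1) hd
      · have h0 : l (Sum.inl (p, q + 1)) = 0 := (hzero p q hd).2
        simp only [h0, mul_zero, zero_smul]
        exact zero_mem _
    · by_cases hd : m ∣ (q + 1)
      · apply Subalgebra.smul_mem
        show ff C p (q + 1) + wp lam i (Sum.inr (p, q)) • ee C p (q + 1) ∈ _
        have hw : wp lam i (Sum.inr (p, q)) = lam ^ (i * (q + 1)) := rfl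
        rw [hw, hz1 _ hd, one_smul]
        have hmm := eeff_mem hC0 m p (q + 1) hd
        rwa [add_comm (ee C p (q + 1))] at hmm
      · have h0 : l (Sum.inr (p, q)) = 0 := (hzero p q hd).1
        simp only [h0, mul_zero, zero_smul]
        exact zero_mem _
  · intro hF
    exact ⟨hτfix F hF, hfix Sp (hmono Sp hSpTerm) F hF, hfix Sm (hmono Sm hSmTerm) F hF⟩

end
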